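/- Let w¹w²⋯wᵐ ∈ RF^m_FPF(z) with |w¹| ≥ 2, |w²| ≠ 0, w¹ = u₁u₂⋯. If u₂ > u₁ + 1 and u₁ < min(cont(w²)), then the factorization w̃¹w̃²w³⋯wᵐ with cont(w̃¹) = cont(w¹)\{u₁} and cont(w̃²) = cont(w²) ∪ {u₁} is again an element of RF^m_FPF(z), and the concatenated words w¹w²⋯wᵐ and w̃¹w̃²w³⋯wᵐ are equivalent FPF-involution words (related by commutation moves only). -/

import Mathlib

/-- The function underlying the permutation `Θ = (12)(34)(56)⋯` on positive integers
(fixing `0`). -/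
def thetaFun (n : ℕ) : ℕ :=
  if n = 0 then 0 else if n % 2 = 1 then n + 1 else n - 1

lemma thetaFun_involutive : Function.Involutive thetaFun := by
  intro n
  by_cases h0 : n = 0
  · simp [thetaFun, h0]
  · by_cases h1 : n % 2 = 1
    · have e1 : thetaFun n = n + 1 := by simp [thetaFun, h0, h1]
      have h2 : ¬ ((n + 1) % 2 = 1) := by omega
      have h3 : ¬ (n + 1 = 0) := by omega
      rw [e1]
      simp only [thetaFun, if_neg h3, if_neg h2]
      omega
    · have e1 : thetaFun n = n - 1 := by simp [thetaFun, h0, h1]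
      have h2 : (n - 1) % 2 = 1 := by omega
      have h3 : ¬ (n - 1 = 0) := by omega
      rw [e1]
      simp only [thetaFun, if_neg h3, if_pos h2]
      omega

/-- The fixed-point-free involution `Θ = (12)(34)(56)⋯`. -/
def theta : Equiv.Perm ℕ := Function.Involutive.toPerm thetaFun thetaFun_involutive

/-- The simple transposition `s_i = (i, i+1)`. -/
def sPerm (i : ℕ) : Equiv.Perm ℕ := Equiv.swap i (i + 1)

/-- For a word `w = i₁i₂⋯i_l`, the permutation `s_{i_l}⋯s_{i₁} Θ s_{i₁}⋯s_{i_l}`. -/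
def heckeConj (w : List ℕ) : Equiv.Perm ℕ :=
  ((w.map sPerm).reverse).prod * theta * (w.map sPerm).prod

/-- `w` is a symplectic Hecke word for `z`, i.e. a word of positive letters with
`z = s_{i_l}⋯s_{i₁} Θ s_{i₁}⋯s_{i_l}`. -/
def SympHecke (z : Equiv.Perm ℕ) (w : List ℕ) : Prop :=
  (∀ i ∈ w, 1 ≤ i) ∧ z = heckeConj w

/-- `z` belongs to `F_∞`, the conjugacy set `{π⁻¹ Θ π : π ∈ S_∞}`. -/
def InFinf (z : Equiv.Perm ℕ) : Prop := ∃ w : List ℕ, SympHecke z w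

/-- `w` is an FPF-involution word for `z`: a symplectic Hecke word for `z` of minimal
length among all symplectic Hecke words for `z`. -/
def IsFPFWordFor (z : Equiv.Perm ℕ) (w : List ℕ) : Prop :=
  SympHecke z w ∧ ∀ w' : List ℕ, SympHecke z w' → w.length ≤ w'.length

/-- `w` is an FPF-involution word (for the element it determines). -/
def IsFPFWord (w : List ℕ) : Prop := IsFPFWordFor (heckeConj w) w
/-- A single Coxeter-Knuth move on three consecutive letters. -/
inductive CKStep : List ℕ → List ℕ → Prop
  | braid (u v : List ℕ) (a : ℕ) :
      CKStep (u ++ (a+1) :: a :: (a+1) :: v) (u ++ a :: (a+1) :: a :: v)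
  | bac (u v : List ℕ) (a b c : ℕ) : a < b → b < c →
      CKStep (u ++ b :: a :: c :: v) (u ++ b :: c :: a :: v)
  | acb (u v : List ℕ) (a b c : ℕ) : a < b → b < c →
      CKStep (u ++ a :: c :: b :: v) (u ++ c :: a :: b :: v)

/-- Coxeter-Knuth equivalence: finite sequences of Coxeter-Knuth moves. -/
def CKEquiv : List ℕ → List ℕ → Prop := Relation.EqvGen CKStep

/-- A single commutation move `⋯ab⋯ ∼ ⋯ba⋯` with `|a-b| > 1`. -/
inductive CommStep : List ℕ → List ℕ → Prop
  | comm (u v : List ℕ) (a b : ℕ) : a + 1 < b ∨ b + 1 < a →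
      CommStep (u ++ a :: b :: v) (u ++ b :: a :: v)

/-- Equivalence generated by commutation moves only. -/
def CommEquiv : List ℕ → List ℕ → Prop := Relation.EqvGen CommStep

/-- A single move generating the equivalence `∼_Sp` on FPF-involution words:
commutations, braid moves, and the initial-letter relation `a(a-1)⋯ ∼ a(a+1)⋯`. -/
inductive SpStep : List ℕ → List ℕ → Prop
  | comm (u v : List ℕ) (a b : ℕ) : a + 1 < b ∨ b + 1 < a →
      SpStep (u ++ a :: b :: v) (u ++ b :: a :: v)
  | braid (u v : List ℕ) (a : ℕ) :
      SpStep (u ++ a :: (a+1) :: a :: v) (u ++ (a+1) :: a :: (a+1) :: v)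
  | initial (v : List ℕ) (a : ℕ) : 2 ≤ a →
      SpStep (a :: (a-1) :: v) (a :: (a+1) :: v)

/-- The equivalence `∼_Sp`. -/
def SpEquiv : List ℕ → List ℕ → Prop := Relation.EqvGen SpStep
/-- Remove from the (increasing) list `A` the smallest element exceeding `b`,
if any; this pairs `b` with that element. -/
def removeSmallestAbove (b : ℕ) : List ℕ → List ℕ
  | [] => []
  | a :: t => if b < a then t else a :: removeSmallestAbove b t

/-- The unpaired letters of `A` in the Morse–Schilling `A·B`-pairing: letters of `B`
are processed in decreasing order (B is increasing, `foldr` starts with its last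
letter), each pairing with the smallest yet-unpaired letter of `A` above it. -/
def unpairedL (A B : List ℕ) : List ℕ :=
  B.foldr (fun b acc => removeSmallestAbove b acc) A

/-- The Morse–Schilling crystal lowering operator `f̃ᵢ` (here `i` is 0-indexed, acting
on blocks `i` and `i+1`) on an increasing factorization. -/
def fMS (i : ℕ) (F : List (List ℕ)) : Option (List (List ℕ)) :=
  let A := F.getD i []
  let B := F.getD (i + 1) []
  match (unpairedL A B).getLast? with
  | none => none
  | some c =>
      let s := ((List.range (A.length + 1)).filter
        (fun j => decide ((c + j + 1) ∉ A))).headD 0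
      some ((F.set i (A.erase c)).set (i + 1) (List.orderedInsert (· ≤ ·) (c + s) B))

/-- Two factorizations are related by a single Morse–Schilling crystal operator. -/
def MSRel (F G : List (List ℕ)) : Prop := ∃ i, i + 1 < F.length ∧ fMS i F = some G

/-- Two factorizations lie in the same connected component of the `gl(m)`-crystal:
one is obtained from the other by a finite sequence of operators `f̃ᵢ, ẽᵢ`. -/
def MSConnected : List (List ℕ) → List (List ℕ) → Prop := Relation.EqvGen MSRel

/-- `F` is an increasing factorization of an FPF-involution word for `z`, i.e. an
element of `RF_FPF^m(z)` with `m = F.length` blocks. -/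
def IsIncFact (z : Equiv.Perm ℕ) (F : List (List ℕ)) : Prop :=
  (∀ b ∈ F, List.Chain' (· < ·) b) ∧ IsFPFWordFor z F.flatten

lemma sPerm_comm (a b : ℕ) (h : a + 1 < b ∨ b + 1 < a) :
    sPerm a * sPerm b = sPerm b * sPerm a := by
  ext x
  simp only [sPerm, Equiv.Perm.mul_apply, Equiv.swap_apply_def]
  split_ifs <;> omega

lemma prod_comm_step (u v : List ℕ) (a b : ℕ) (h : a + 1 < b ∨ b + 1 < a) :
    ((u ++ a :: b :: v).map sPerm).prod = ((u ++ b :: a :: v).map sPerm).prod := by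
  simp only [List.map_append, List.map_cons, List.prod_append, List.prod_cons]
  rw [← mul_assoc (sPerm a), sPerm_comm a b h, mul_assoc]

lemma heckeConj_commStep {x y : List ℕ} (h : CommStep x y) :
    heckeConj x = heckeConj y := by
  cases h with
  | comm u v a b hab =>
    unfold heckeConj
    rw [← List.map_reverse, ← List.map_reverse]
    have hr : ∀ (p q : ℕ), (u ++ p :: q :: v).reverse = v.reverse ++ q :: p :: u.reverse := by
      intro p q; simp
    rw [hr, hr, prod_comm_step u v a b hab,
      prod_comm_step v.reverse u.reverse a b hab]

lemma perm_commStep {x y : List ℕ} (h : CommStep x y) : x.Perm y := by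
  cases h with
  | comm u v a b _ =>
    exact List.Perm.append_left u (List.Perm.swap b a v)

lemma commEquiv_heckeConj {x y : List ℕ} (h : CommEquiv x y) :
    heckeConj x = heckeConj y ∧ x.Perm y := by
  induction h with
  | rel _ _ h => exact ⟨heckeConj_commStep h, perm_commStep h⟩
  | refl _ => exact ⟨rfl, List.Perm.refl _⟩
  | symm _ _ _ ih => exact ⟨ih.1.symm, ih.2.symm⟩
  | trans _ _ _ _ _ ih₁ ih₂ => exact ⟨ih₁.1.trans ih₂.1, ih₁.2.trans ih₂.2⟩

lemma commEquiv_cons {x y : List ℕ} (c : ℕ) (h : CommEquiv x y) :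
    CommEquiv (c :: x) (c :: y) := by
  induction h with
  | rel _ _ h =>
    apply Relation.EqvGen.rel
    cases h with
    | comm u v a b hab => exact CommStep.comm (c :: u) v a b hab
  | refl _ => exact Relation.EqvGen.refl _
  | symm _ _ _ ih => exact Relation.EqvGen.symm _ _ ih
  | trans _ _ _ _ _ ih₁ ih₂ => exact Relation.EqvGen.trans _ _ _ ih₁ ih₂

lemma commEquiv_move_left (u₁ : ℕ) (L r : List ℕ) (h : ∀ a ∈ L, u₁ + 1 < a) :
    CommEquiv (u₁ :: (L ++ r)) (L ++ u₁ :: r) := by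
  induction L with
  | nil => exact Relation.EqvGen.refl _
  | cons a L ih =>
    refine Relation.EqvGen.trans _ (a :: u₁ :: (L ++ r)) _ ?_ ?_
    · exact Relation.EqvGen.rel _ _
        (CommStep.comm [] (L ++ r) u₁ a (Or.inl (h a (List.mem_cons_self))))
    · exact commEquiv_cons a (ih (fun b hb => h b (List.mem_cons_of_mem a hb)))

/-- If `w¹ = u₁u₂⋯` with `u₂ > u₁ + 1` and `u₁ < min(cont(w²))`, then moving `u₁` from
the first block to the front of the second block gives another element of
`RF_FPF^m(z)`, whose concatenation is related to the original one by commutation moves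
only. -/
theorem odd_lowering_generic_case (z : Equiv.Perm ℕ) (u₁ u₂ : ℕ)
    (t w₂ : List ℕ) (rest : List (List ℕ))
    (hF : IsIncFact z ((u₁ :: u₂ :: t) :: w₂ :: rest))
    (hw₂ : w₂ ≠ []) (hgap : u₁ + 1 < u₂) (hmin : ∀ v ∈ w₂, u₁ < v) :
    IsIncFact z ((u₂ :: t) :: (u₁ :: w₂) :: rest) ∧
    CommEquiv ((u₁ :: u₂ :: t) :: w₂ :: rest).flatten
      ((u₂ :: t) :: (u₁ :: w₂) :: rest).flatten := by
  obtain ⟨hch, hword⟩ := hF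
  have hch1 : List.Chain' (· < ·) (u₁ :: u₂ :: t) := hch _ (by simp)
  have hch2 : List.Chain' (· < ·) w₂ := hch _ (by simp)
  have hL : ∀ a ∈ u₂ :: t, u₁ + 1 < a := by
    intro a ha
    rcases List.mem_cons.mp ha with h | h
    · omega
    · have hp := List.isChain_iff_pairwise.mp hch1.tail
      have := (List.pairwise_cons.mp hp).1 a h
      omega
  have hflat1 : ((u₁ :: u₂ :: t) :: w₂ :: rest).flatten
      = u₁ :: ((u₂ :: t) ++ (w₂ ++ rest.flatten)) := by simp
  have hflat2 : ((u₂ :: t) :: (u₁ :: w₂) :: rest).flatten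
      = (u₂ :: t) ++ u₁ :: (w₂ ++ rest.flatten) := by simp
  have hce : CommEquiv ((u₁ :: u₂ :: t) :: w₂ :: rest).flatten
      ((u₂ :: t) :: (u₁ :: w₂) :: rest).flatten := by
    rw [hflat1, hflat2]
    exact commEquiv_move_left u₁ (u₂ :: t) (w₂ ++ rest.flatten) hL
  obtain ⟨heq, hperm⟩ := commEquiv_heckeConj hce
  refine ⟨⟨?_, ?_, ?_⟩, hce⟩
  · intro b hb
    rcases List.mem_cons.mp hb with h | hb
    · subst h; exact hch1.tail
    rcases List.mem_cons.mp hb with h | hb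
    · subst h
      refine List.isChain_cons.mpr ⟨?_, hch2⟩
      intro y hy
      exact hmin y (List.mem_of_mem_head? hy)
    · exact hch _ (by simp [hb])
  · obtain ⟨⟨hpos, hz⟩, _⟩ := hword
    refine ⟨?_, ?_⟩
    · intro i hi
      exact hpos i (hperm.mem_iff.mpr hi)
    · rw [hz, heq]
  · intro w' hw'
    have := hword.2 w' hw'
    rw [← hperm.length_eq]
    exact this
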